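/- For 0 ≤ h ≤ m−u−v+w and any x ∈ F_{m,u,v,w}, the number of pairs (a,b) ∈ E_{m,u+h} × E_{m,v+h} with a − b = x equals 3^h · C(m−u−v+w, h). -/

import Mathlib

open Finset

abbrev G4 : Type := ZMod 4 × ZMod 4

def L1 : Finset G4 := {(0,0),(0,1),(1,0)}

def L2 : Finset G4 := {(3,3)}

def N11 : Finset G4 := {(0,1),(0,3),(1,0),(3,0),(1,3),(3,1)}

def N12 : Finset G4 := {(1,1),(1,2),(2,1)}

def N21 : Finset G4 := {(3,3),(3,2),(2,3)}

def N22 : Finset G4 := {(0,0)}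

/-- The number of coordinates of `z` lying in `A`. -/
def cnt {m : ℕ} (A : Finset G4) (z : Fin m → G4) : ℕ :=
  (univ.filter fun i => z i ∈ A).card

/-- `E_{m,i}`: the union of all products of `i` copies of `L₁` and `m - i` copies of `L₂`. -/
def E (m i : ℕ) : Finset (Fin m → G4) :=
  univ.filter fun x => (∀ j, x j ∈ L1 ∪ L2) ∧ cnt L1 x = i

/-- `F_{m,a,b,c,d}`: tuples with exactly `a` coordinates in `N₁₁`, `b` in `N₁₂`,
`c` in `N₂₁` and `d` in `N₂₂`. -/
def Fset (m a b c d : ℕ) : Finset (Fin m → G4) :=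
  univ.filter fun z => (∀ j, z j ∈ N11 ∪ N12 ∪ N21 ∪ N22) ∧
    cnt N11 z = a ∧ cnt N12 z = b ∧ cnt N21 z = c ∧ cnt N22 z = d

lemma key1 : ∀ y ∈ N11 ∪ N12 ∪ N21, ∀ a ∈ L1 ∪ L2, a - y ∈ L1 ∪ L2 →
    ((a ∈ L1 ↔ y ∈ N11 ∪ N12) ∧ (a - y ∈ L1 ↔ y ∈ N11 ∪ N21)) := by decide
lemma key2 : ∀ y ∈ N11 ∪ N12 ∪ N21,
    ((L1 ∪ L2).filter fun c => c - y ∈ L1 ∪ L2).card = 1 := by decide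
lemma key3 : ∀ y : G4, y ∈ N11 ∪ N12 ∪ N21 ∪ N22 → y ≠ (0,0) → y ∈ N11 ∪ N12 ∪ N21 := by decide
lemma key4 : ∀ y : G4, ¬ (y ∈ N11 ∧ y ∈ N12) := by decide
lemma key5 : ∀ y : G4, ¬ (y ∈ N11 ∧ y ∈ N21) := by decide
lemma key6 : ∀ y : G4, y ∈ N11 ∪ N12 → y ≠ (0,0) := by decide
lemma key7 : ∀ y : G4, y ∈ N11 ∪ N21 → y ≠ (0,0) := by decide
lemma key8 : ∀ y : G4, y ∈ N22 ↔ y = (0,0) := by decide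
lemma key9 : ∀ a : G4, a ∈ L1 ∪ L2 → a ∉ L1 → a ∈ L2 := by decide
lemma keyL1 : (L1 : Finset G4).card = 3 := by decide
lemma keyL2 : (L2 : Finset G4).card = 1 := by decide
lemma key11 : ∀ a : G4, a ∈ L2 → a ∉ L1 := by decide
lemma key12 : ∀ a : G4, a ∈ L1 → a ∈ L1 ∪ L2 := by decide
lemma key13 : ∀ a : G4, a ∈ L2 → a ∈ L1 ∪ L2 := by decide
lemma key00 : ((0,0) : G4) = 0 := rfl

theorem stmt15 (m u v w h : ℕ) (hwu : w ≤ u) (hwv : w ≤ v) (hum : u ≤ m) (hvm : v ≤ m)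
    (huv : u + v ≤ m + w) (hh : h ≤ m + w - u - v)
    (x : Fin m → G4) (hx : x ∈ Fset m w (u - w) (v - w) (m + w - u - v)) :
    ((E m (u + h) ×ˢ E m (v + h)).filter fun p => p.1 - p.2 = x).card
      = 3 ^ h * (m + w - u - v).choose h := by
  rw [Fset, mem_filter] at hx
  simp only [cnt, mem_univ, true_and] at hx
  obtain ⟨hxmem, h11, h12, h21, h22⟩ := hx
  set S : Fin m → Finset G4 := fun j => (L1 ∪ L2).filter (fun c => c - x j ∈ L1 ∪ L2)
    with hSdef
  set D : Finset (Fin m) := univ.filter (fun j => x j = (0,0)) with hDdef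
  have hDcard : D.card = m + w - u - v := by
    rw [← h22]; congr 1; apply filter_congr; intro j _
    simp only [key8 (x j)]
  have hforced : ∀ j, ¬ x j = (0,0) → ∀ a : G4, a ∈ L1 ∪ L2 → a - x j ∈ L1 ∪ L2 →
      ((a ∈ L1 ↔ x j ∈ N11 ∪ N12) ∧ (a - x j ∈ L1 ↔ x j ∈ N11 ∪ N21)) :=
    fun j hj a h1 h2 => key1 (x j) (key3 _ (hxmem j) hj) a h1 h2
  -- counts of x-classes
  have hc12 : (univ.filter fun j => x j ∈ N11 ∪ N12).card = w + (u - w) := by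
    have he : (univ.filter fun j => x j ∈ N11 ∪ N12)
        = (univ.filter fun j => x j ∈ N11) ∪ (univ.filter fun j => x j ∈ N12) := by
      ext j; simp [mem_filter, mem_union, and_or_left]
    rw [he, card_union_of_disjoint, h11, h12]
    rw [disjoint_left]
    intro j hj1 hj2
    exact key4 (x j) ⟨(mem_filter.1 hj1).2, (mem_filter.1 hj2).2⟩
  have hc21 : (univ.filter fun j => x j ∈ N11 ∪ N21).card = w + (v - w) := by
    have he : (univ.filter fun j => x j ∈ N11 ∪ N21)
        = (univ.filter fun j => x j ∈ N11) ∪ (univ.filter fun j => x j ∈ N21) := by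
      ext j; simp [mem_filter, mem_union, and_or_left]
    rw [he, card_union_of_disjoint, h11, h21]
    rw [disjoint_left]
    intro j hj1 hj2
    exact key5 (x j) ⟨(mem_filter.1 hj1).2, (mem_filter.1 hj2).2⟩
  -- the counting lemma
  have hcount : ∀ a : Fin m → G4, (∀ j, a j ∈ S j) →
      cnt L1 a = (D.filter fun j => a j ∈ L1).card + (w + (u - w)) ∧
      cnt L1 (a - x) = (D.filter fun j => a j ∈ L1).card + (w + (v - w)) := by
    intro a ha
    have haL : ∀ j, a j ∈ L1 ∪ L2 := fun j => (mem_filter.1 (ha j)).1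
    have haR : ∀ j, a j - x j ∈ L1 ∪ L2 := fun j => (mem_filter.1 (ha j)).2
    constructor
    · rw [cnt, ← Finset.card_filter_add_card_filter_not
        (p := fun j => x j = (0,0))]
      congr 1
      · rw [filter_comm]
      · rw [filter_filter]
        rw [show (univ.filter fun j => a j ∈ L1 ∧ ¬ x j = (0,0))
            = univ.filter fun j => x j ∈ N11 ∪ N12 from ?_, hc12]
        apply filter_congr; intro j _
        constructor
        · rintro ⟨hjL1, hj0⟩
          exact ((hforced j hj0 (a j) (haL j) (haR j)).1).1 hjL1
        · intro hjmem
          have hj0 := key6 _ hjmem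
          exact ⟨((hforced j hj0 (a j) (haL j) (haR j)).1).2 hjmem, hj0⟩
    · rw [cnt, ← Finset.card_filter_add_card_filter_not
        (p := fun j => x j = (0,0))]
      congr 1
      · rw [filter_comm]
        congr 1
        apply filter_congr; intro j hj
        have hj0 : x j = (0,0) := (mem_filter.1 hj).2
        rw [Pi.sub_apply, hj0, key00, sub_zero]
      · rw [filter_filter]
        rw [show (univ.filter fun j => (a - x) j ∈ L1 ∧ ¬ x j = (0,0))
            = univ.filter fun j => x j ∈ N11 ∪ N21 from ?_, hc21]
        apply filter_congr; intro j _
        simp only [Pi.sub_apply]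
        constructor
        · rintro ⟨hjL1, hj0⟩
          exact ((hforced j hj0 (a j) (haL j) (haR j)).2).1 hjL1
        · intro hjmem
          have hj0 := key7 _ hjmem
          exact ⟨((hforced j hj0 (a j) (haL j) (haR j)).2).2 hjmem, hj0⟩
  -- step 1: pairs to single functions
  set A : Finset (Fin m → G4) := univ.filter fun a =>
    (∀ j, a j ∈ S j) ∧ (D.filter fun j => a j ∈ L1).card = h with hAdef
  have hstep1 : ((E m (u + h) ×ˢ E m (v + h)).filter fun p => p.1 - p.2 = x).card
      = A.card := by
    apply Finset.card_bij' (fun p _ => p.1) (fun a _ => (a, a - x))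
    · intro p hp
      rw [mem_filter, mem_product] at hp
      obtain ⟨⟨hp1, hp2⟩, hpx⟩ := hp
      have hpb : p.1 - x = p.2 := by rw [← hpx]; exact sub_sub_cancel _ _
      rw [E, mem_filter] at hp1 hp2
      simp only [cnt, mem_univ, true_and] at hp1 hp2
      have hSa : ∀ j, p.1 j ∈ S j := by
        intro j
        refine mem_filter.2 ⟨hp1.1 j, ?_⟩
        have := hp2.1 j
        rw [← hpb] at this
        simpa using this
      obtain ⟨hc1, hc2⟩ := hcount p.1 hSa
      rw [hAdef, mem_filter]
      refine ⟨mem_univ _, hSa, ?_⟩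
      simp only [cnt] at hc1
      omega
    · intro a ha
      rw [hAdef, mem_filter] at ha
      obtain ⟨-, hSa, hk⟩ := ha
      obtain ⟨hc1, hc2⟩ := hcount a hSa
      rw [mem_filter, mem_product]
      refine ⟨⟨?_, ?_⟩, ?_⟩
      · rw [E, mem_filter]
        simp only [mem_univ, true_and]
        exact ⟨fun j => (mem_filter.1 (hSa j)).1, by omega⟩
      · rw [E, mem_filter]
        simp only [mem_univ, true_and]
        refine ⟨fun j => ?_, by omega⟩
        simpa using (mem_filter.1 (hSa j)).2
      · exact sub_sub_cancel _ _
    · intro p hp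
      rw [mem_filter] at hp
      exact Prod.ext rfl (by rw [← hp.2]; exact sub_sub_cancel _ _)
    · intro a ha; rfl
  rw [hstep1]
  have htf : ∀ a ∈ A, (D.filter fun j => a j ∈ L1) ∈ D.powersetCard h := by
    intro a ha
    rw [hAdef, mem_filter] at ha
    exact mem_powersetCard.2 ⟨filter_subset _ _, ha.2.2⟩
  rw [Finset.card_eq_sum_card_fiberwise htf]
  have hfiber : ∀ K ∈ D.powersetCard h,
      (A.filter fun a => (D.filter fun j => a j ∈ L1) = K).card = 3 ^ h := by
    intro K hK
    obtain ⟨hKD, hKcard⟩ := mem_powersetCard.1 hK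
    have hKx : ∀ j ∈ K, x j = (0,0) := fun j hj => (mem_filter.1 (hKD hj)).2
    have hEq : (A.filter fun a => (D.filter fun j => a j ∈ L1) = K)
        = Fintype.piFinset
          (fun j => if x j = (0,0) then (if j ∈ K then L1 else L2) else S j) := by
      ext a
      simp only [Fintype.mem_piFinset, mem_filter, hAdef, mem_univ, true_and]
      constructor
      · rintro ⟨⟨hSa, hcard⟩, hφ⟩
        intro j
        by_cases hj0 : x j = (0,0)
        · rw [if_pos hj0]
          have hjD : j ∈ D := mem_filter.2 ⟨mem_univ _, hj0⟩
          by_cases hjK : j ∈ K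
          · rw [if_pos hjK]
            rw [← hφ] at hjK
            exact (mem_filter.1 hjK).2
          · rw [if_neg hjK]
            have hnotL1 : a j ∉ L1 := fun hL1 => hjK (hφ ▸ mem_filter.2 ⟨hjD, hL1⟩)
            exact key9 _ (mem_filter.1 (hSa j)).1 hnotL1
        · rw [if_neg hj0]; exact hSa j
      · intro hfa
        have hSa : ∀ j, a j ∈ S j := by
          intro j
          by_cases hj0 : x j = (0,0)
          · have hj := hfa j
            rw [if_pos hj0] at hj
            have hmem : a j ∈ L1 ∪ L2 := by
              by_cases hjK : j ∈ K
              · exact key12 _ (by rwa [if_pos hjK] at hj)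
              · exact key13 _ (by rwa [if_neg hjK] at hj)
            refine mem_filter.2 ⟨hmem, ?_⟩
            rw [hj0, key00, sub_zero]; exact hmem
          · have hj := hfa j
            rwa [if_neg hj0] at hj
        have hφK : (D.filter fun j => a j ∈ L1) = K := by
          ext j
          rw [mem_filter]
          constructor
          · rintro ⟨hjD, hjL1⟩
            have hj0 : x j = (0,0) := (mem_filter.1 hjD).2
            by_contra hjK
            have hj := hfa j
            rw [if_pos hj0, if_neg hjK] at hj
            exact key11 _ hj hjL1
          · intro hjK
            have hjD := hKD hjK
            have hj := hfa j
            rw [if_pos (mem_filter.1 hjD).2, if_pos hjK] at hj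
            exact ⟨hjD, hj⟩
        exact ⟨⟨hSa, hφK ▸ hKcard⟩, hφK⟩
    rw [hEq, Fintype.card_piFinset]
    rw [← Finset.prod_mul_prod_compl K]
    have h1 : (∏ j ∈ K,
        (if x j = (0,0) then (if j ∈ K then L1 else L2) else S j).card) = 3 ^ h := by
      have hc : ∀ j ∈ K,
          (if x j = (0,0) then (if j ∈ K then L1 else L2) else S j).card = 3 := by
        intro j hj
        rw [if_pos (hKx j hj), if_pos hj, keyL1]
      rw [Finset.prod_congr rfl hc, Finset.prod_const, hKcard]
    have h2 : (∏ j ∈ Kᶜ,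
        (if x j = (0,0) then (if j ∈ K then L1 else L2) else S j).card) = 1 := by
      apply Finset.prod_eq_one
      intro j hj
      rw [mem_compl] at hj
      by_cases hj0 : x j = (0,0)
      · rw [if_pos hj0, if_neg hj, keyL2]
      · rw [if_neg hj0, hSdef]
        exact key2 _ (key3 _ (hxmem j) hj0)
    rw [h1, h2, mul_one]
  rw [Finset.sum_congr rfl hfiber, Finset.sum_const, Finset.card_powersetCard,
    hDcard, smul_eq_mul, mul_comm]
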